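/- For any two probability densities p and q on R (or R^d), KL(p || q) \ge c \cdot \chi^2(p || (p+q)/2) for some universal constant c > 0; in particular one may take the bound KL(p||q) \ge 2\log(2) \cdot \chi^2(p || (p+q)/2). -/

import Mathlib

open MeasureTheory Real


-- Upper Padé bound: log u ≤ (u-1)(u+5)/(2(2u+1)) for u ≥ 1
lemma logA {u : ℝ} (hu : 1 ≤ u) : Real.log u ≤ (u - 1) * (u + 5) / (2 * (2 * u + 1)) := by
  set f : ℝ → ℝ := fun x => (x - 1) * (x + 5) / (2 * (2 * x + 1)) - Real.log x with hf
  have hder : ∀ x : ℝ, 0 < x → HasDerivAt f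
      (((2*x+4) * (2*(2*x+1)) - (x-1)*(x+5)*4) / (2*(2*x+1))^2 - 1/x) x := by
    intro x hx
    have h1 : HasDerivAt (fun y : ℝ => (y - 1) * (y + 5)) (2*x+4) x := by
      have := ((hasDerivAt_id x).sub_const 1).mul ((hasDerivAt_id x).add_const 5)
      refine this.congr_deriv ?_; (try simp only [id_eq]); ring
    have h2 : HasDerivAt (fun y : ℝ => 2 * (2 * y + 1)) 4 x := by
      have := (((hasDerivAt_id x).const_mul 2).add_const 1).const_mul 2
      refine this.congr_deriv ?_; (try simp only [id_eq]); ring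
    have hden : 2 * (2 * x + 1) ≠ 0 := by nlinarith
    have h3 := h1.div h2 hden
    have h4 := Real.hasDerivAt_log (ne_of_gt hx)
    refine (h3.sub h4).congr_deriv ?_
    rw [one_div]
  have hmono : MonotoneOn f (Set.Ici 1) := by
    apply monotoneOn_of_deriv_nonneg (convex_Ici 1)
    · intro x hx
      have hx0 : (0:ℝ) < x := lt_of_lt_of_le one_pos hx
      exact ((hder x hx0).differentiableAt).continuousAt.continuousWithinAt
    · intro x hx
      rw [interior_Ici] at hx
      have hx0 : (0:ℝ) < x := lt_trans one_pos hx
      exact ((hder x hx0).differentiableAt).differentiableWithinAt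
    · intro x hx
      rw [interior_Ici] at hx
      have hx0 : (0:ℝ) < x := lt_trans one_pos hx
      rw [(hder x hx0).deriv]
      have hd : (0:ℝ) < (2*(2*x+1))^2 := by nlinarith
      have hx1 : (0:ℝ) ≤ x - 1 := by have := Set.mem_Ioi.mp hx; linarith
      have hc : 0 ≤ (x-1)^3 := by positivity
      rw [sub_nonneg, div_le_div_iff₀ hx0 hd]
      nlinarith [sq_nonneg (x-1)]
  have h0 : f 1 = 0 := by simp [hf]
  have := hmono (Set.self_mem_Ici) (Set.mem_Ici.mpr hu) hu
  rw [h0] at this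
  simpa [hf, sub_nonneg] using this

-- Lower Padé bound: log u ≥ 3(u²-1)/(u²+4u+1) for u ≥ 1
lemma logB {u : ℝ} (hu : 1 ≤ u) : 3*(u^2-1)/(u^2+4*u+1) ≤ Real.log u := by
  set f : ℝ → ℝ := fun x => Real.log x - 3*(x^2-1)/(x^2+4*x+1) with hf
  have hder : ∀ x : ℝ, 0 < x → HasDerivAt f
      (1/x - ((6*x) * (x^2+4*x+1) - 3*(x^2-1)*(2*x+4)) / (x^2+4*x+1)^2) x := by
    intro x hx
    have h1 : HasDerivAt (fun y : ℝ => 3*(y^2-1)) (6*x) x := by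
      have := ((hasDerivAt_pow 2 x).sub_const 1).const_mul 3
      refine this.congr_deriv ?_; (try simp only [id_eq]); ring
    have h2 : HasDerivAt (fun y : ℝ => y^2+4*y+1) (2*x+4) x := by
      have := ((hasDerivAt_pow 2 x).add (((hasDerivAt_id x).const_mul 4))).add_const 1
      refine this.congr_deriv ?_; (try simp only [id_eq]); ring
    have hden : x^2+4*x+1 ≠ 0 := by nlinarith
    have h3 := h1.div h2 hden
    have h4 := Real.hasDerivAt_log (ne_of_gt hx)
    refine (h4.sub h3).congr_deriv ?_
    rw [one_div]
  have hmono : MonotoneOn f (Set.Ici 1) := by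
    apply monotoneOn_of_deriv_nonneg (convex_Ici 1)
    · intro x hx
      have hx0 : (0:ℝ) < x := lt_of_lt_of_le one_pos hx
      exact ((hder x hx0).differentiableAt).continuousAt.continuousWithinAt
    · intro x hx
      rw [interior_Ici] at hx
      have hx0 : (0:ℝ) < x := lt_trans one_pos hx
      exact ((hder x hx0).differentiableAt).differentiableWithinAt
    · intro x hx
      rw [interior_Ici] at hx
      have hx0 : (0:ℝ) < x := lt_trans one_pos hx
      rw [(hder x hx0).deriv]
      have hd : (0:ℝ) < (x^2+4*x+1)^2 := by nlinarith
      have hc : 0 ≤ (x-1)^4 := by positivity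
      rw [sub_nonneg, div_le_div_iff₀ hd hx0]
      nlinarith
  have h0 : f 1 = 0 := by norm_num [hf]
  have := hmono (Set.self_mem_Ici) (Set.mem_Ici.mpr hu) hu
  rw [h0] at this
  simpa [hf, sub_nonneg] using this



lemma tlem {t : ℝ} (ht : 0 < t) :
    Real.log 2 * (t - 1)^2 / (t + 1) ≤ t * Real.log t - t + 1 := by
  have hL0 : (0:ℝ) < Real.log 2 := Real.log_pos one_lt_two
  have hL : Real.log 2 < 0.6931471808 := Real.log_two_lt_d9
  have hd1 : (0:ℝ) < t + 1 := by linarith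
  rcases le_or_gt 1 t with h | h
  · have hB := logB h
    have hd2 : (0:ℝ) < t^2 + 4*t + 1 := by nlinarith
    have h1 : t * (3*(t^2-1)/(t^2+4*t+1)) ≤ t * Real.log t :=
      mul_le_mul_of_nonneg_left hB ht.le
    have h2 : Real.log 2 * (t-1)^2 / (t+1) ≤ t * (3*(t^2-1)/(t^2+4*t+1)) - t + 1 := by
      have e : t * (3*(t^2-1)/(t^2+4*t+1)) - t + 1 = (t-1)^2*(2*t+1)/(t^2+4*t+1) := by
        field_simp; ring
      rw [e, div_le_div_iff₀ hd1 hd2]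
      nlinarith [sq_nonneg (t-1), sq_nonneg ((t-1)*(t+1)), sq_nonneg ((t-1)*t)]
    linarith
  · have hu : 1 ≤ 1/t := one_le_one_div ht h.le
    have hA := logA hu
    have hne : t ≠ 0 := ne_of_gt ht
    have e1 : (1/t - 1) * (1/t + 5) / (2 * (2 * (1/t) + 1)) = (1-t)*(1+5*t)/(2*t*(2+t)) := by
      field_simp
    have e2 : Real.log (1/t) = -Real.log t := by
      rw [one_div, Real.log_inv]
    rw [e1, e2] at hA
    -- hA : -log t ≤ (1-t)(1+5t)/(2t(2+t))
    have h1 : t * (-Real.log t) ≤ t * ((1-t)*(1+5*t)/(2*t*(2+t))) :=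
      mul_le_mul_of_nonneg_left hA ht.le
    have e3 : t * ((1-t)*(1+5*t)/(2*t*(2+t))) = (1-t)*(1+5*t)/(2*(2+t)) := by
      field_simp
    rw [e3] at h1
    -- so t log t ≥ -(1-t)(1+5t)/(2(2+t))
    have h2 : Real.log 2 * (t-1)^2 / (t+1) ≤ -((1-t)*(1+5*t)/(2*(2+t))) - t + 1 := by
      have hd2 : (0:ℝ) < 2*(2+t) := by linarith
      have e : -((1-t)*(1+5*t)/(2*(2+t))) - t + 1 = 3*(1-t)^2/(2*(2+t)) := by
        field_simp; ring
      rw [e, div_le_div_iff₀ hd1 hd2]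
      have hpos : 0 ≤ (1-t)^2 * (3*(t+1) - 2*Real.log 2*(2+t)) :=
        mul_nonneg (sq_nonneg _) (by nlinarith)
      nlinarith [hpos]
    linarith
  
lemma key {a b : ℝ} (ha : 0 ≤ a) (hb : 0 < b) :
    2 * Real.log 2 * ((a - (a+b)/2)^2 / ((a+b)/2)) ≤ a * Real.log (a/b) - (a - b) := by
  have hL0 : (0:ℝ) < Real.log 2 := Real.log_pos one_lt_two
  have hL : Real.log 2 < 0.6931471808 := Real.log_two_lt_d9
  rcases eq_or_lt_of_le ha with h | h
  · subst h
    have e : ((0:ℝ) - (0+b)/2)^2 / ((0+b)/2) = b/2 := by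
      have : b ≠ 0 := ne_of_gt hb
      field_simp
      ring
    rw [e]
    simp only [zero_div, Real.log_zero, mul_zero, zero_mul, zero_sub, sub_neg_eq_add, zero_add]
    nlinarith
  · have ht : 0 < a / b := div_pos h hb
    have htl := tlem ht
    have hab : 0 < a + b := by linarith
    have e1 : 2 * Real.log 2 * ((a - (a+b)/2)^2 / ((a+b)/2))
        = b * (Real.log 2 * (a/b - 1)^2 / (a/b + 1)) := by
      field_simp; ring
    have e2 : a * Real.log (a/b) - (a - b) = b * ((a/b) * Real.log (a/b) - a/b + 1) := by
      field_simp; ring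
    rw [e1, e2]
    exact mul_le_mul_of_nonneg_left htl hb.le

/-- For any two probability densities `p` and `q` on `ℝ` (with `q` positive, and with the KL
and chi-squared integrands integrable), one has
`KL(p ‖ q) ≥ 2 log 2 · χ²(p ‖ (p+q)/2)`, where `KL(p‖q) = ∫ p log(p/q)` and
`χ²(p‖r) = ∫ (p-r)²/r`; in particular `KL(p‖q) ≥ c · χ²(p ‖ (p+q)/2)` for a universal
constant `c > 0`. -/
theorem kl_chisq_half
    (p q : ℝ → ℝ) (hp0 : ∀ x, 0 ≤ p x) (hq0 : ∀ x, 0 < q x)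
    (hpm : Measurable p) (hqm : Measurable q)
    (hpint : ∫ x, p x = 1) (hqint : ∫ x, q x = 1)
    (hKL : Integrable (fun x => p x * Real.log (p x / q x)))
    (hchi : Integrable (fun x => (p x - (p x + q x) / 2) ^ 2 / ((p x + q x) / 2))) :
    2 * Real.log 2 * (∫ x, (p x - (p x + q x) / 2) ^ 2 / ((p x + q x) / 2))
      ≤ ∫ x, p x * Real.log (p x / q x) := by
  have hpInt : Integrable p := by
    by_contra h
    rw [integral_undef h] at hpint
    exact zero_ne_one hpint
  have hqInt : Integrable q := by
    by_contra h
    rw [integral_undef h] at hqint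
    exact zero_ne_one hqint
  have hpq : Integrable (fun x => p x - q x) := hpInt.sub hqInt
  have hfInt : Integrable (fun x => p x * Real.log (p x / q x) - (p x - q x)) :=
    hKL.sub hpq
  have hgInt : Integrable (fun x => 2 * Real.log 2 *
      ((p x - (p x + q x) / 2) ^ 2 / ((p x + q x) / 2))) := hchi.const_mul _
  have hmono : ∀ x, 2 * Real.log 2 * ((p x - (p x + q x) / 2) ^ 2 / ((p x + q x) / 2))
      ≤ p x * Real.log (p x / q x) - (p x - q x) := fun x => key (hp0 x) (hq0 x)
  have hint := integral_mono hgInt hfInt hmono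
  rw [integral_const_mul] at hint
  rw [integral_sub hKL hpq, integral_sub hpInt hqInt, hpint, hqint] at hint
  simpa using hint
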